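/- Let m, n ∈ ℕ with m, n ≥ 1, b > 1, α > 0, β > 0 with αβ > 1, R > 0, and let P, Q : [R, bR] → ℝ be nonnegative nonincreasing continuous functions and h, g : [R, bR] → ℝ nonnegative continuous functions satisfying h(r) ≥ ∫_R^r (r-s)^m P(s) g(s)^α ds and g(r) ≥ ∫_R^r (r-s)^n Q(s) h(s)^β ds for all r in [R, bR]. Define z(r) = ∫_R^r (r-s)^n Q(s) h(s)^β ds. Then there exists a constant C_z > 0, depending only on m, n, α, β, b (and not on R, P, Q, h, g), such that for every A in (R, bR) with z(A) > 0, z(A)^((αβ-1)/((m+1)β+n+1)) · ∫_A^(bR) (Q(r) P(r)^β)^(1/((m+1)β+n+1)) dr ≤ C_z. -/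

import Mathlib

open MeasureTheory intervalIntegral Set

set_option maxHeartbeats 2000000

private lemma memLp_aux {μ : Measure ℝ} {f : ℝ → ℝ} {p : ℝ} (hp : 1 ≤ p)
    (hf : AEStronglyMeasurable f μ) (hint : Integrable (fun x => |f x| ^ p) μ) :
    MemLp f (ENNReal.ofReal p) μ := by
  have hp0 : 0 < p := lt_of_lt_of_le one_pos hp
  have h0 : ENNReal.ofReal p ≠ 0 := by
    simp only [ne_eq, ENNReal.ofReal_eq_zero, not_le]; exact hp0
  have ht : ENNReal.ofReal p ≠ ⊤ := ENNReal.ofReal_ne_top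
  refine (memLp_norm_rpow_iff (q := ENNReal.ofReal p) hf h0 ht).mp ?_
  rw [ENNReal.div_self h0 ht, memLp_one_iff_integrable]
  refine hint.congr (Filter.Eventually.of_forall fun x => ?_)
  simp only [Real.norm_eq_abs, ENNReal.toReal_ofReal hp0.le]

private lemma beta_aux {c₁ c₂ a ρ : ℝ} (h₁ : 0 < c₁) (h₂ : 0 < c₂) (hsum : c₁ + c₂ = 1)
    (hlt : a < ρ) :
    IntervalIntegrable (fun s => (ρ - s) ^ (-c₁) * (s - a) ^ (-c₂)) volume a ρ ∧
    (∫ s in a..ρ, (ρ - s) ^ (-c₁) * (s - a) ^ (-c₂)) ≤ 1 / (1 - c₁) + 1 / (1 - c₂) := by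
  have h₁' : c₁ < 1 := by linarith
  have h₂' : c₂ < 1 := by linarith
  set mid : ℝ := (a + ρ) / 2 with hmid
  have hamid : a < mid := by rw [hmid]; linarith
  have hmidρ : mid < ρ := by rw [hmid]; linarith
  have hL2 : 0 < (ρ - a) / 2 := by linarith
  have hma : mid - a = (ρ - a) / 2 := by rw [hmid]; ring
  have hρm : ρ - mid = (ρ - a) / 2 := by rw [hmid]; ring
  have i₁ : IntervalIntegrable (fun s : ℝ => (s - a) ^ (-c₂)) volume a mid := by
    have h := (intervalIntegrable_rpow' (r := -c₂) (by linarith) (a := 0)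
      (b := mid - a)).comp_sub_right a
    have e1 : 0 + a = a := by ring
    have e2 : mid - a + a = mid := by ring
    rwa [e1, e2] at h
  have i₂ : IntervalIntegrable (fun s : ℝ => (ρ - s) ^ (-c₁)) volume mid ρ := by
    have h := (intervalIntegrable_rpow' (r := -c₁) (by linarith) (a := 0)
      (b := ρ - mid)).comp_sub_left ρ
    have e1 : ρ - 0 = ρ := by ring
    have e2 : ρ - (ρ - mid) = mid := by ring
    rw [e1, e2] at h
    exact h.symm
  have hcont : ContinuousOn (fun s : ℝ => (ρ - s) ^ (-c₁) * (s - a) ^ (-c₂)) (Ioo a ρ) := by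
    apply ContinuousOn.mul
    · refine (continuousOn_const.sub continuousOn_id).rpow_const (fun x hx => Or.inl ?_)
      have hxρ : x < ρ := hx.2
      simp only [Pi.sub_apply, id_eq]
      intro hc
      rw [sub_eq_zero] at hc
      exact hxρ.ne hc.symm
    · refine (continuousOn_id.sub continuousOn_const).rpow_const (fun x hx => Or.inl ?_)
      have hax : a < x := hx.1
      simp only [Pi.sub_apply, id_eq]
      intro hc
      rw [sub_eq_zero] at hc
      exact hax.ne' hc
  have hsub₁ : Ioc a mid ⊆ Ioo a ρ := fun x hx => ⟨hx.1, lt_of_le_of_lt hx.2 hmidρ⟩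
  have hsub₂ : Ioo mid ρ ⊆ Ioo a ρ := fun x hx => ⟨hamid.trans hx.1, hx.2⟩
  have j₁ : IntervalIntegrable (fun s : ℝ => (ρ - s) ^ (-c₁) * (s - a) ^ (-c₂)) volume a mid := by
    refine (i₁.const_mul (((ρ - a)/2) ^ (-c₁))).mono_fun' ?_ ?_
    · rw [uIoc_of_le hamid.le]
      exact (hcont.mono hsub₁).aestronglyMeasurable measurableSet_Ioc
    · rw [uIoc_of_le hamid.le]
      refine Filter.eventually_of_mem (self_mem_ae_restrict measurableSet_Ioc) ?_
      intro s hs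
      have hb1 : (0:ℝ) ≤ ρ - s := by
        have := hs.2; linarith
      have hb2 : (0:ℝ) ≤ s - a := by
        have := hs.1; linarith
      simp only [Real.norm_eq_abs]
      rw [abs_of_nonneg (mul_nonneg (Real.rpow_nonneg hb1 _) (Real.rpow_nonneg hb2 _))]
      refine mul_le_mul_of_nonneg_right ?_ (Real.rpow_nonneg hb2 _)
      refine Real.rpow_le_rpow_of_nonpos hL2 ?_ (by linarith)
      have := hs.2; linarith
  have j₂ : IntervalIntegrable (fun s : ℝ => (ρ - s) ^ (-c₁) * (s - a) ^ (-c₂)) volume mid ρ := by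
    refine (i₂.mul_const (((ρ - a)/2) ^ (-c₂))).mono_fun' ?_ ?_
    · rw [uIoc_of_le hmidρ.le, ← Measure.restrict_congr_set Ioo_ae_eq_Ioc]
      exact (hcont.mono hsub₂).aestronglyMeasurable measurableSet_Ioo
    · rw [uIoc_of_le hmidρ.le]
      refine Filter.eventually_of_mem (self_mem_ae_restrict measurableSet_Ioc) ?_
      intro s hs
      have hb1 : (0:ℝ) ≤ ρ - s := by
        have := hs.2; linarith
      have hb2 : (0:ℝ) ≤ s - a := by
        have h := hs.1; linarith
      simp only [Real.norm_eq_abs]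
      rw [abs_of_nonneg (mul_nonneg (Real.rpow_nonneg hb1 _) (Real.rpow_nonneg hb2 _))]
      refine mul_le_mul_of_nonneg_left ?_ (Real.rpow_nonneg hb1 _)
      refine Real.rpow_le_rpow_of_nonpos hL2 ?_ (by linarith)
      have := hs.1; linarith
  constructor
  · exact j₁.trans j₂
  · have int₁ : (∫ s in a..mid, (s - a) ^ (-c₂)) = ((ρ - a)/2) ^ (1 - c₂) / (1 - c₂) := by
      have hc : (∫ s in a..mid, (s - a) ^ (-c₂)) = ∫ x in a - a..mid - a, x ^ (-c₂) :=
        (intervalIntegral.integral_comp_sub_right (fun x => x ^ (-c₂)) a)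
      rw [hc, sub_self, hma, integral_rpow (Or.inl (by linarith))]
      rw [Real.zero_rpow (by linarith : -c₂ + 1 ≠ 0)]
      norm_num
      ring_nf
    have int₂ : (∫ s in mid..ρ, (ρ - s) ^ (-c₁)) = ((ρ - a)/2) ^ (1 - c₁) / (1 - c₁) := by
      have hc : (∫ s in mid..ρ, (ρ - s) ^ (-c₁)) = ∫ x in ρ - ρ..ρ - mid, x ^ (-c₁) :=
        (intervalIntegral.integral_comp_sub_left (fun x => x ^ (-c₁)) ρ)
      rw [hc, sub_self, hρm, integral_rpow (Or.inl (by linarith))]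
      rw [Real.zero_rpow (by linarith : -c₁ + 1 ≠ 0)]
      norm_num
      ring_nf
    have e₁ : (∫ s in a..mid, (ρ - s) ^ (-c₁) * (s - a) ^ (-c₂)) ≤ 1 / (1 - c₂) := by
      have hmono := intervalIntegral.integral_mono_on hamid.le j₁
        (i₁.const_mul (((ρ - a)/2) ^ (-c₁))) ?_
      · calc (∫ s in a..mid, (ρ - s) ^ (-c₁) * (s - a) ^ (-c₂))
            ≤ ∫ s in a..mid, ((ρ - a)/2) ^ (-c₁) * (s - a) ^ (-c₂) := hmono
          _ = ((ρ - a)/2) ^ (-c₁) * (((ρ - a)/2) ^ (1 - c₂) / (1 - c₂)) := by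
              rw [intervalIntegral.integral_const_mul, int₁]
          _ = 1 / (1 - c₂) := by
              rw [← mul_div_assoc, ← Real.rpow_add hL2]
              have : -c₁ + (1 - c₂) = 0 := by linarith
              rw [this, Real.rpow_zero]
      · intro s hs
        have hb2 : (0:ℝ) ≤ s - a := by have := hs.1; linarith
        refine mul_le_mul_of_nonneg_right ?_ (Real.rpow_nonneg hb2 _)
        refine Real.rpow_le_rpow_of_nonpos hL2 ?_ (by linarith)
        have := hs.2; linarith
    have e₂ : (∫ s in mid..ρ, (ρ - s) ^ (-c₁) * (s - a) ^ (-c₂)) ≤ 1 / (1 - c₁) := by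
      have hmono := intervalIntegral.integral_mono_on hmidρ.le j₂
        (i₂.mul_const (((ρ - a)/2) ^ (-c₂))) ?_
      · calc (∫ s in mid..ρ, (ρ - s) ^ (-c₁) * (s - a) ^ (-c₂))
            ≤ ∫ s in mid..ρ, (ρ - s) ^ (-c₁) * ((ρ - a)/2) ^ (-c₂) := hmono
          _ = (((ρ - a)/2) ^ (1 - c₁) / (1 - c₁)) * ((ρ - a)/2) ^ (-c₂) := by
              rw [intervalIntegral.integral_mul_const, int₂]
          _ = 1 / (1 - c₁) := by
              rw [div_mul_eq_mul_div, ← Real.rpow_add hL2]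
              have : 1 - c₁ + -c₂ = 0 := by linarith
              rw [this, Real.rpow_zero]
      · intro s hs
        have hb1 : (0:ℝ) ≤ ρ - s := by have := hs.2; linarith
        refine mul_le_mul_of_nonneg_left ?_ (Real.rpow_nonneg hb1 _)
        refine Real.rpow_le_rpow_of_nonpos hL2 ?_ (by linarith)
        have := hs.1; linarith
    have hsplit := intervalIntegral.integral_add_adjacent_intervals j₁ j₂
    rw [← hsplit]
    linarith

theorem stmt_4 (m n : ℕ) (hm : 1 ≤ m) (hn : 1 ≤ n) (α β : ℝ) (hα : 0 < α) (hβ : 0 < β)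
    (hαβ : 1 < α * β) (b : ℝ) (hb : 1 < b) :
    ∃ C > (0 : ℝ), ∀ (R : ℝ), 0 < R →
      ∀ (P Q h g : ℝ → ℝ),
        (∀ r ∈ Set.Icc R (b * R), 0 ≤ P r) → AntitoneOn P (Set.Icc R (b * R)) →
        ContinuousOn P (Set.Icc R (b * R)) →
        (∀ r ∈ Set.Icc R (b * R), 0 ≤ Q r) → AntitoneOn Q (Set.Icc R (b * R)) →
        ContinuousOn Q (Set.Icc R (b * R)) →
        (∀ r ∈ Set.Icc R (b * R), 0 ≤ h r) → ContinuousOn h (Set.Icc R (b * R)) →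
        (∀ r ∈ Set.Icc R (b * R), 0 ≤ g r) → ContinuousOn g (Set.Icc R (b * R)) →
        (∀ r ∈ Set.Icc R (b * R), h r ≥ ∫ s in R..r, (r - s) ^ m * P s * g s ^ α) →
        (∀ r ∈ Set.Icc R (b * R), g r ≥ ∫ s in R..r, (r - s) ^ n * Q s * h s ^ β) →
        ∀ A ∈ Set.Ioo R (b * R),
          0 < (∫ s in R..A, (A - s) ^ n * Q s * h s ^ β) →
          (∫ s in R..A, (A - s) ^ n * Q s * h s ^ β) ^
              ((α * β - 1) / (((m : ℝ) + 1) * β + n + 1)) *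
            ∫ r in A..(b * R), (Q r * P r ^ β) ^ ((1 : ℝ) / (((m : ℝ) + 1) * β + n + 1)) ≤ C := by
  -- abbreviations for the exponents and constants
  set D : ℝ := ((m : ℝ) + 1) * β + n + 1 with hDdef
  set γ : ℝ := (α * β - 1) / D with hγdef
  have hmβ : 0 < ((m : ℝ) + 1) * β := by positivity
  have hn1 : (1 : ℝ) ≤ (n : ℝ) := by exact_mod_cast hn
  have hD1 : 1 < D := by rw [hDdef]; nlinarith
  have hD0 : 0 < D := by linarith
  have hDm1 : 0 < D - 1 := by linarith
  set q : ℝ := D / (D - 1) with hqdef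
  have hq1 : 1 < q := by
    rw [hqdef, lt_div_iff₀ hDm1]; linarith
  have hpq : Real.HolderConjugate D q := by
    rw [hqdef]
    exact Real.HolderConjugate.conjExponent hD1
  set c₁ : ℝ := (n : ℝ) / (D - 1) with hc₁def
  set c₂ : ℝ := ((m : ℝ) + 1) * β / (D - 1) with hc₂def
  have hc₁ : 0 < c₁ := by rw [hc₁def]; positivity
  have hc₂ : 0 < c₂ := by rw [hc₂def]; positivity
  have hcsum : c₁ + c₂ = 1 := by
    rw [hc₁def, hc₂def, ← add_div, hDdef]
    rw [div_eq_one_iff_eq (ne_of_gt (by linarith))]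
    ring
  have hc₁1 : c₁ < 1 := by linarith
  have hc₂1 : c₂ < 1 := by linarith
  set B₀ : ℝ := 1 / (1 - c₁) + 1 / (1 - c₂) with hB₀def
  have hB₀ : 0 < B₀ := by
    rw [hB₀def]
    have h1 : 0 < 1 - c₁ := by linarith
    have h2 : 0 < 1 - c₂ := by linarith
    positivity
  set K : ℝ := ((m : ℝ) + 1) ^ β with hKdef
  have hK : 0 < K := by
    rw [hKdef]; exact Real.rpow_pos_of_pos (by positivity) β
  set C₀ : ℝ := K ^ (1 / D) * B₀ ^ (1 / q) with hC₀def
  have hC₀ : 0 < C₀ := by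
    rw [hC₀def]
    exact mul_pos (Real.rpow_pos_of_pos hK _) (Real.rpow_pos_of_pos hB₀ _)
  have hγpos : 0 < γ := by rw [hγdef]; exact div_pos (by linarith) hD0
  have htwoγ : (2 : ℝ) ^ (-γ) < 1 :=
    Real.rpow_lt_one_of_one_lt_of_neg one_lt_two (by linarith)
  have htwoγ0 : (0 : ℝ) < 2 ^ (-γ) := Real.rpow_pos_of_pos two_pos _
  have hden : 0 < 1 - (2 : ℝ) ^ (-γ) := by linarith
  set M : ℝ := C₀ * 2 ^ ((1 : ℝ) / D) / (1 - 2 ^ (-γ)) with hMdef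
  have htwoD : (0 : ℝ) < 2 ^ ((1 : ℝ) / D) := Real.rpow_pos_of_pos two_pos _
  have hM : 0 < M := by rw [hMdef]; positivity
  have hMge : C₀ * 2 ^ ((1 : ℝ) / D) ≤ M := by
    rw [hMdef, le_div_iff₀ hden]
    nlinarith [mul_pos (mul_pos hC₀ htwoD) htwoγ0]
  have hMrec : C₀ * 2 ^ ((1 : ℝ) / D) + M * 2 ^ (-γ) = M := by
    rw [hMdef]
    field_simp
    ring
  refine ⟨M, hM, ?_⟩
  intro R hR P Q h g hP0 hPanti hPc hQ0 hQanti hQc hh0 hhc hg0 hgc hhy hgz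
  set T : ℝ := b * R with hTdef
  have hRT : R < T := by
    rw [hTdef]
    exact (lt_mul_iff_one_lt_left hR).mpr hb
  -- the function z
  set z : ℝ → ℝ := fun r => ∫ s in R..r, (r - s) ^ n * Q s * h s ^ β with hzdef
  -- continuity of auxiliary integrands
  have hhβc : ContinuousOn (fun s => h s ^ β) (Icc R T) :=
    hhc.rpow_const (fun x _ => Or.inr hβ.le)
  have hgαc : ContinuousOn (fun s => g s ^ α) (Icc R T) :=
    hgc.rpow_const (fun x _ => Or.inr hα.le)
  have hFc : ∀ w : ℝ, ContinuousOn (fun s => (w - s) ^ n * Q s * h s ^ β) (Icc R T) := by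
    intro w
    exact (((continuousOn_const.sub continuousOn_id).pow n).mul hQc).mul hhβc
  have hGc : ∀ w : ℝ, ContinuousOn (fun σ => (w - σ) ^ m * P σ * g σ ^ α) (Icc R T) := by
    intro w
    exact (((continuousOn_const.sub continuousOn_id).pow m).mul hPc).mul hgαc
  have hFint : ∀ (w u v : ℝ), R ≤ u → u ≤ v → v ≤ T →
      IntervalIntegrable (fun s => (w - s) ^ n * Q s * h s ^ β) volume u v := by
    intro w u v hu huv hv
    apply ContinuousOn.intervalIntegrable
    apply (hFc w).mono
    rw [uIcc_of_le huv]
    exact Icc_subset_Icc hu hv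
  have hGint : ∀ (w u v : ℝ), R ≤ u → u ≤ v → v ≤ T →
      IntervalIntegrable (fun σ => (w - σ) ^ m * P σ * g σ ^ α) volume u v := by
    intro w u v hu huv hv
    apply ContinuousOn.intervalIntegrable
    apply (hGc w).mono
    rw [uIcc_of_le huv]
    exact Icc_subset_Icc hu hv
  -- monotonicity of z
  have hzmono : ∀ u v, R ≤ u → u ≤ v → v ≤ T → z u ≤ z v := by
    intro u v hu huv hv
    simp only [hzdef]
    rw [← intervalIntegral.integral_add_adjacent_intervals (hFint v R u le_rfl hu (huv.trans hv))
      (hFint v u v hu huv hv)]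
    have h1 : (∫ s in R..u, (u - s) ^ n * Q s * h s ^ β)
        ≤ ∫ s in R..u, (v - s) ^ n * Q s * h s ^ β := by
      apply intervalIntegral.integral_mono_on hu (hFint u R u le_rfl hu (huv.trans hv))
        (hFint v R u le_rfl hu (huv.trans hv))
      intro s hs
      have hsm : s ∈ Icc R T := Icc_subset_Icc le_rfl (huv.trans hv) hs
      have h2 : (u - s) ^ n ≤ (v - s) ^ n := by
        apply pow_le_pow_left₀ (by linarith [hs.2]) (by linarith)
      apply mul_le_mul_of_nonneg_right _ (Real.rpow_nonneg (hh0 s hsm) β)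
      exact mul_le_mul_of_nonneg_right h2 (hQ0 s hsm)
    have h2 : 0 ≤ ∫ s in u..v, (v - s) ^ n * Q s * h s ^ β := by
      apply intervalIntegral.integral_nonneg huv
      intro s hs
      have hsm : s ∈ Icc R T := Icc_subset_Icc hu hv hs
      have : (0:ℝ) ≤ (v - s) ^ n := by
        apply pow_nonneg; linarith [hs.2]
      exact mul_nonneg (mul_nonneg this (hQ0 s hsm)) (Real.rpow_nonneg (hh0 s hsm) β)
    linarith
  -- continuity of z
  have hzcont : ContinuousOn z (Icc R T) := by
    have hψc : ∀ j : ℕ, ContinuousOn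
        (fun s : ℝ => ((n.choose j : ℝ) * (-s) ^ (n - j)) * (Q s * h s ^ β)) (Icc R T) := by
      intro j
      exact (continuousOn_const.mul ((continuousOn_id.neg).pow _)).mul (hQc.mul hhβc)
    have hψint : ∀ (j : ℕ) (r : ℝ), r ∈ Icc R T → IntervalIntegrable
        (fun s : ℝ => ((n.choose j : ℝ) * (-s) ^ (n - j)) * (Q s * h s ^ β)) volume R r := by
      intro j r hr
      apply ContinuousOn.intervalIntegrable
      apply (hψc j).mono
      rw [uIcc_of_le hr.1]
      exact Icc_subset_Icc le_rfl hr.2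
    have hrep : ∀ r ∈ Icc R T, z r = ∑ j ∈ Finset.range (n + 1),
        r ^ j * ∫ s in R..r, ((n.choose j : ℝ) * (-s) ^ (n - j)) * (Q s * h s ^ β) := by
      intro r hr
      simp only [hzdef]
      have expand : ∀ s : ℝ, (r - s) ^ n * Q s * h s ^ β
          = ∑ j ∈ Finset.range (n + 1),
            r ^ j * (((n.choose j : ℝ) * (-s) ^ (n - j)) * (Q s * h s ^ β)) := by
        intro s
        have hb := add_pow r (-s) n
        rw [← sub_eq_add_neg] at hb
        calc (r - s) ^ n * Q s * h s ^ β
            = (∑ j ∈ Finset.range (n + 1), r ^ j * (-s) ^ (n - j) * (n.choose j : ℝ))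
              * (Q s * h s ^ β) := by rw [← hb]; ring
          _ = _ := by
              rw [Finset.sum_mul]
              exact Finset.sum_congr rfl fun j _ => by ring
      simp_rw [expand]
      rw [intervalIntegral.integral_finset_sum]
      · exact Finset.sum_congr rfl fun j _ => intervalIntegral.integral_const_mul _ _
      · intro j _
        exact (hψint j r hr).const_mul _
    refine ContinuousOn.congr ?_ hrep
    refine continuousOn_finset_sum _ fun j _ => ?_
    refine ((continuous_pow j).continuousOn).mul ?_
    have hio : IntegrableOn
        (fun s : ℝ => ((n.choose j : ℝ) * (-s) ^ (n - j)) * (Q s * h s ^ β)) (uIcc R T) := by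
      rw [uIcc_of_le hRT.le]
      exact (hψc j).integrableOn_Icc
    have := intervalIntegral.continuousOn_primitive_interval (a := R) (b := T) hio
    rwa [uIcc_of_le hRT.le] at this
  -- the function E and its integrability
  set E : ℝ → ℝ := fun r => (Q r * P r ^ β) ^ ((1:ℝ) / D) with hEdef
  have hEc : ContinuousOn E (Icc R T) := by
    simp only [hEdef]
    exact (hQc.mul (hPc.rpow_const (fun x _ => Or.inr hβ.le))).rpow_const
      (fun x _ => Or.inr (by positivity))
  have hEint : ∀ u v, R ≤ u → u ≤ v → v ≤ T → IntervalIntegrable E volume u v := by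
    intro u v hu huv hv
    apply ContinuousOn.intervalIntegrable
    apply hEc.mono
    rw [uIcc_of_le huv]
    exact Icc_subset_Icc hu hv
  -- nonnegativity of z
  have hznn : ∀ u, R ≤ u → u ≤ T → 0 ≤ z u := by
    intro u hu huT
    simp only [hzdef]
    apply intervalIntegral.integral_nonneg hu
    intro s hs
    have hsm : s ∈ Icc R T := Icc_subset_Icc le_rfl huT hs
    have : (0:ℝ) ≤ (u - s) ^ n := by apply pow_nonneg; linarith [hs.2]
    exact mul_nonneg (mul_nonneg this (hQ0 s hsm)) (Real.rpow_nonneg (hh0 s hsm) β)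
  -- THE MAIN ESTIMATE
  have hmain : ∀ a ρ, R ≤ a → a < ρ → ρ ≤ T → 0 < z a →
      (∫ r in a..ρ, E r) ≤ C₀ * (z ρ ^ ((1:ℝ) / D) * z a ^ (-(α * β) / D)) := by
    intro a ρ ha haρ hρT hza
    have haT : a ≤ T := haρ.le.trans hρT
    have hIccsub : Icc a ρ ⊆ Icc R T := Icc_subset_Icc ha hρT
    -- Step 1: pointwise lower bound for h on [a, ρ]
    have hlb : ∀ s ∈ Icc a ρ, (s - a) ^ (m + 1) / ((m : ℝ) + 1) * (P s * z a ^ α) ≤ h s := by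
      intro s hs
      have hsm : s ∈ Icc R T := hIccsub hs
      have hsa : a ≤ s := hs.1
      have hsρ : s ≤ ρ := hs.2
      have hy := hhy s hsm
      have hsplit := intervalIntegral.integral_add_adjacent_intervals
        (hGint s R a le_rfl ha (hsa.trans (hsρ.trans hρT)))
        (hGint s a s ha hsa (hsρ.trans hρT))
      have h1 : (0:ℝ) ≤ ∫ σ in R..a, (s - σ) ^ m * P σ * g σ ^ α := by
        apply intervalIntegral.integral_nonneg ha
        intro σ hσ
        have hσm : σ ∈ Icc R T := Icc_subset_Icc le_rfl haT hσ
        have : (0:ℝ) ≤ (s - σ) ^ m := by apply pow_nonneg; linarith [hσ.2]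
        exact mul_nonneg (mul_nonneg this (hP0 σ hσm)) (Real.rpow_nonneg (hg0 σ hσm) α)
      have h2 : (∫ σ in a..s, (s - σ) ^ m * (P s * z a ^ α))
          ≤ ∫ σ in a..s, (s - σ) ^ m * P σ * g σ ^ α := by
        apply intervalIntegral.integral_mono_on hsa
        · apply Continuous.intervalIntegrable
          exact ((continuous_const.sub continuous_id).pow m).mul continuous_const
        · exact hGint s a s ha hsa (hsρ.trans hρT)
        · intro σ hσ
          have hσm : σ ∈ Icc R T := ⟨ha.trans hσ.1, (hσ.2.trans hsρ).trans hρT⟩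
          have hσs : σ ≤ s := hσ.2
          have hpow : (0:ℝ) ≤ (s - σ) ^ m := by apply pow_nonneg; linarith
          have hPs : P s ≤ P σ := hPanti hσm hsm hσs
          have hga : z a ^ α ≤ g σ ^ α := by
            apply Real.rpow_le_rpow hza.le _ hα.le
            have hza' : z a ≤ z σ := hzmono a σ ha hσ.1 (hσs.trans (hsρ.trans hρT))
            have hgσ := hgz σ hσm
            simp only [hzdef] at hza' ⊢
            linarith [hgσ]
          calc (s - σ) ^ m * (P s * z a ^ α)
              ≤ (s - σ) ^ m * (P σ * g σ ^ α) := by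
                apply mul_le_mul_of_nonneg_left _ hpow
                exact mul_le_mul hPs hga (Real.rpow_nonneg hza.le α) (hP0 σ hσm)
            _ = (s - σ) ^ m * P σ * g σ ^ α := by ring
      have h3 : (∫ σ in a..s, (s - σ) ^ m * (P s * z a ^ α))
          = (s - a) ^ (m + 1) / ((m : ℝ) + 1) * (P s * z a ^ α) := by
        rw [intervalIntegral.integral_mul_const]
        congr 1
        have hc : (∫ σ in a..s, (s - σ) ^ m) = ∫ x in s - s..s - a, x ^ m :=
          intervalIntegral.integral_comp_sub_left (fun x => x ^ m) s
        rw [hc, sub_self, integral_pow]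
        rw [zero_pow (Nat.succ_ne_zero m)]
        push_cast
        ring
      rw [h3] at h2
      linarith [hy, hsplit, h1, h2]
    -- Step 2: key integral inequality
    set WF : ℝ → ℝ := fun s =>
      (ρ - s) ^ (n : ℝ) * (s - a) ^ (((m : ℝ) + 1) * β) * (Q s * P s ^ β) with hWFdef
    have hWFc : ContinuousOn WF (Icc a ρ) := by
      simp only [hWFdef]
      refine ContinuousOn.mul (ContinuousOn.mul ?_ ?_) ?_
      · exact (continuousOn_const.sub continuousOn_id).rpow_const
          (fun x _ => Or.inr (by positivity))
      · exact (continuousOn_id.sub continuousOn_const).rpow_const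
          (fun x _ => Or.inr (by positivity))
      · exact (hQc.mono hIccsub).mul ((hPc.mono hIccsub).rpow_const (fun x _ => Or.inr hβ.le))
    have hWFnn : ∀ s ∈ Icc a ρ, 0 ≤ WF s := by
      intro s hs
      have hsm : s ∈ Icc R T := hIccsub hs
      simp only [hWFdef]
      have h1 : (0:ℝ) ≤ ρ - s := by linarith [hs.2]
      have h2 : (0:ℝ) ≤ s - a := by linarith [hs.1]
      exact mul_nonneg (mul_nonneg (Real.rpow_nonneg h1 _) (Real.rpow_nonneg h2 _))
        (mul_nonneg (hQ0 s hsm) (Real.rpow_nonneg (hP0 s hsm) β))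
    have hWFint : IntervalIntegrable WF volume a ρ := by
      apply ContinuousOn.intervalIntegrable
      rwa [uIcc_of_le haρ.le]
    set J : ℝ := ∫ s in a..ρ, WF s with hJdef
    have hJnn : 0 ≤ J := by
      rw [hJdef]
      exact intervalIntegral.integral_nonneg haρ.le hWFnn
    have hcstpos : 0 < z a ^ (α * β) / K := by positivity
    have hKeyJ : z a ^ (α * β) / K * J ≤ z ρ := by
      have hsplit := intervalIntegral.integral_add_adjacent_intervals
        (hFint ρ R a le_rfl ha haT) (hFint ρ a ρ ha haρ.le hρT)
      have h1 : (0:ℝ) ≤ ∫ s in R..a, (ρ - s) ^ n * Q s * h s ^ β := by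
        apply intervalIntegral.integral_nonneg ha
        intro s hs
        have hsm : s ∈ Icc R T := Icc_subset_Icc le_rfl haT hs
        have : (0:ℝ) ≤ (ρ - s) ^ n := by apply pow_nonneg; linarith [hs.2, haρ]
        exact mul_nonneg (mul_nonneg this (hQ0 s hsm)) (Real.rpow_nonneg (hh0 s hsm) β)
      have h2 : (∫ s in a..ρ, z a ^ (α * β) / K * WF s)
          ≤ ∫ s in a..ρ, (ρ - s) ^ n * Q s * h s ^ β := by
        apply intervalIntegral.integral_mono_on haρ.le (hWFint.const_mul _)
          (hFint ρ a ρ ha haρ.le hρT)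
        intro s hs
        have hsm : s ∈ Icc R T := hIccsub hs
        have hs1 : (0:ℝ) ≤ ρ - s := by linarith [hs.2]
        have hs2 : (0:ℝ) ≤ s - a := by linarith [hs.1]
        have hbase : (0:ℝ) ≤ (s - a) ^ (m + 1) / ((m : ℝ) + 1) * (P s * z a ^ α) := by
          have := hP0 s hsm
          positivity
        have hrp : ((s - a) ^ (m + 1) / ((m : ℝ) + 1) * (P s * z a ^ α)) ^ β ≤ h s ^ β :=
          Real.rpow_le_rpow hbase (hlb s hs) hβ.le
        have hfac : (0:ℝ) ≤ (ρ - s) ^ n * Q s :=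
          mul_nonneg (pow_nonneg hs1 n) (hQ0 s hsm)
        have heq : z a ^ (α * β) / K * WF s
            = (ρ - s) ^ n * Q s * ((s - a) ^ (m + 1) / ((m : ℝ) + 1) * (P s * z a ^ α)) ^ β := by
          simp only [hWFdef, hKdef]
          rw [Real.mul_rpow (by positivity) (mul_nonneg (hP0 s hsm) (Real.rpow_nonneg hza.le α)),
              Real.mul_rpow (hP0 s hsm) (Real.rpow_nonneg hza.le α),
              Real.div_rpow (pow_nonneg hs2 _) (by positivity : (0:ℝ) ≤ (m:ℝ)+1),
              ← Real.rpow_natCast_mul hs2 (m + 1) β,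
              ← Real.rpow_natCast (ρ - s) n,
              ← Real.rpow_mul hza.le]
          push_cast
          ring
        calc z a ^ (α * β) / K * WF s
            = (ρ - s) ^ n * Q s * ((s - a) ^ (m + 1) / ((m : ℝ) + 1) * (P s * z a ^ α)) ^ β := heq
          _ ≤ (ρ - s) ^ n * Q s * h s ^ β := mul_le_mul_of_nonneg_left hrp hfac
      have h3 : (∫ s in a..ρ, z a ^ (α * β) / K * WF s) = z a ^ (α * β) / K * J := by
        rw [hJdef]
        exact intervalIntegral.integral_const_mul _ _
      have hzρeq : z ρ = (∫ s in R..a, (ρ - s) ^ n * Q s * h s ^ β)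
          + ∫ s in a..ρ, (ρ - s) ^ n * Q s * h s ^ β := by
        simp only [hzdef]
        rw [hsplit]
      rw [hzρeq]
      linarith [h1, h2, h3]
    have hzρpos : 0 < z ρ := lt_of_lt_of_le hza (hzmono a ρ ha haρ.le hρT)
    have hzaαβ : 0 < z a ^ (α * β) := Real.rpow_pos_of_pos hza _
    have hJle : J ≤ K * z ρ * (z a ^ (α * β))⁻¹ := by
      have hKJ' : J * (z a ^ (α * β) / K) ≤ z ρ := by
        calc J * (z a ^ (α * β) / K) = z a ^ (α * β) / K * J := by ring
          _ ≤ z ρ := hKeyJ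
      calc J = J * (z a ^ (α * β) / K) * (K * (z a ^ (α * β))⁻¹) := by
            field_simp
        _ ≤ z ρ * (K * (z a ^ (α * β))⁻¹) :=
            mul_le_mul_of_nonneg_right hKJ' (by positivity)
        _ = K * z ρ * (z a ^ (α * β))⁻¹ := by ring
    -- Step 3: Hölder's inequality
    set μ' : Measure ℝ := volume.restrict (Ioo a ρ) with hμ'def
    set e₁ : ℝ := (n : ℝ) / D with he₁def
    set e₂ : ℝ := ((m : ℝ) + 1) * β / D with he₂def
    have he₁0 : 0 ≤ e₁ := by rw [he₁def]; positivity
    have he₂0 : 0 ≤ e₂ := by rw [he₂def]; positivity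
    set f : ℝ → ℝ := fun s =>
      (Q s * P s ^ β) ^ ((1:ℝ) / D) * ((ρ - s) ^ e₁ * (s - a) ^ e₂) with hfdef
    set G : ℝ → ℝ := fun s => (ρ - s) ^ (-e₁) * (s - a) ^ (-e₂) with hGdef
    have hQP : ∀ s ∈ Icc R T, 0 ≤ Q s * P s ^ β := fun s hs =>
      mul_nonneg (hQ0 s hs) (Real.rpow_nonneg (hP0 s hs) β)
    have hf0 : ∀ s ∈ Icc a ρ, 0 ≤ f s := by
      intro s hs
      simp only [hfdef]
      have hs1 : (0:ℝ) ≤ ρ - s := by linarith [hs.2]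
      have hs2 : (0:ℝ) ≤ s - a := by linarith [hs.1]
      exact mul_nonneg (Real.rpow_nonneg (hQP s (hIccsub hs)) _)
        (mul_nonneg (Real.rpow_nonneg hs1 _) (Real.rpow_nonneg hs2 _))
    have hg0' : ∀ s ∈ Ioo a ρ, 0 ≤ G s := by
      intro s hs
      simp only [hGdef]
      exact mul_nonneg (Real.rpow_nonneg (by linarith [hs.2] : (0:ℝ) ≤ ρ - s) _)
        (Real.rpow_nonneg (by linarith [hs.1] : (0:ℝ) ≤ s - a) _)
    have hfg : ∀ s ∈ Ioo a ρ, f s * G s = E s := by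
      intro s hs
      have hs1 : (0:ℝ) < ρ - s := by linarith [hs.2]
      have hs2 : (0:ℝ) < s - a := by linarith [hs.1]
      simp only [hfdef, hGdef, hEdef]
      have h1 : (ρ - s) ^ e₁ * (ρ - s) ^ (-e₁) = 1 := by
        rw [← Real.rpow_add hs1]; simp
      have h2 : (s - a) ^ e₂ * (s - a) ^ (-e₂) = 1 := by
        rw [← Real.rpow_add hs2]; simp
      calc (Q s * P s ^ β) ^ ((1:ℝ) / D) * ((ρ - s) ^ e₁ * (s - a) ^ e₂)
            * ((ρ - s) ^ (-e₁) * (s - a) ^ (-e₂))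
          = (Q s * P s ^ β) ^ ((1:ℝ) / D) * (((ρ - s) ^ e₁ * (ρ - s) ^ (-e₁))
            * ((s - a) ^ e₂ * (s - a) ^ (-e₂))) := by ring
        _ = (Q s * P s ^ β) ^ ((1:ℝ) / D) := by rw [h1, h2]; ring
    have hfD : ∀ s ∈ Icc a ρ, f s ^ D = WF s := by
      intro s hs
      have hs1 : (0:ℝ) ≤ ρ - s := by linarith [hs.2]
      have hs2 : (0:ℝ) ≤ s - a := by linarith [hs.1]
      simp only [hfdef, hWFdef]
      rw [Real.mul_rpow (Real.rpow_nonneg (hQP s (hIccsub hs)) _)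
          (mul_nonneg (Real.rpow_nonneg hs1 _) (Real.rpow_nonneg hs2 _)),
        Real.mul_rpow (Real.rpow_nonneg hs1 _) (Real.rpow_nonneg hs2 _),
        ← Real.rpow_mul (hQP s (hIccsub hs)), ← Real.rpow_mul hs1, ← Real.rpow_mul hs2]
      have k1 : (1:ℝ) / D * D = 1 := by field_simp
      have k2 : e₁ * D = (n : ℝ) := by rw [he₁def]; field_simp
      have k3 : e₂ * D = ((m : ℝ) + 1) * β := by rw [he₂def]; field_simp
      rw [k1, k2, k3, Real.rpow_one]
      ring
    have hgq : ∀ s ∈ Ioo a ρ, G s ^ q = (ρ - s) ^ (-c₁) * (s - a) ^ (-c₂) := by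
      intro s hs
      have hs1 : (0:ℝ) ≤ ρ - s := by linarith [hs.2]
      have hs2 : (0:ℝ) ≤ s - a := by linarith [hs.1]
      simp only [hGdef]
      rw [Real.mul_rpow (Real.rpow_nonneg hs1 _) (Real.rpow_nonneg hs2 _),
        ← Real.rpow_mul hs1, ← Real.rpow_mul hs2]
      have k1 : -e₁ * q = -c₁ := by
        rw [he₁def, hqdef, hc₁def]
        field_simp
        try ring
      have k2 : -e₂ * q = -c₂ := by
        rw [he₂def, hqdef, hc₂def]
        field_simp
        try ring
      rw [k1, k2]
    -- membership in Lᵖ spaces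
    have hfcont : ContinuousOn f (Icc a ρ) := by
      simp only [hfdef]
      refine ContinuousOn.mul ?_ (ContinuousOn.mul ?_ ?_)
      · exact ((hQc.mono hIccsub).mul ((hPc.mono hIccsub).rpow_const
          (fun x _ => Or.inr hβ.le))).rpow_const (fun x _ => Or.inr (by positivity))
      · exact (continuousOn_const.sub continuousOn_id).rpow_const (fun x _ => Or.inr he₁0)
      · exact (continuousOn_id.sub continuousOn_const).rpow_const (fun x _ => Or.inr he₂0)
    have hgcont : ContinuousOn G (Ioo a ρ) := by
      simp only [hGdef]
      apply ContinuousOn.mul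
      · refine (continuousOn_const.sub continuousOn_id).rpow_const (fun x hx => Or.inl ?_)
        have hxρ : x < ρ := hx.2
        simp only [Pi.sub_apply, id_eq]
        intro hc
        rw [sub_eq_zero] at hc
        exact hxρ.ne hc.symm
      · refine (continuousOn_id.sub continuousOn_const).rpow_const (fun x hx => Or.inl ?_)
        have hax : a < x := hx.1
        simp only [Pi.sub_apply, id_eq]
        intro hc
        rw [sub_eq_zero] at hc
        exact hax.ne' hc
    have hWFio : IntegrableOn WF (Ioo a ρ) := by
      exact (hWFc.integrableOn_Icc).mono_set Ioo_subset_Icc_self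
    have hfmem : MemLp f (ENNReal.ofReal D) μ' := by
      refine memLp_aux hD1.le ?_ ?_
      · exact ((hfcont.mono Ioo_subset_Icc_self).aestronglyMeasurable measurableSet_Ioo)
      · refine hWFio.congr ?_
        refine Filter.eventually_of_mem (self_mem_ae_restrict measurableSet_Ioo) ?_
        intro s hs
        have hsIcc : s ∈ Icc a ρ := Ioo_subset_Icc_self hs
        show WF s = |f s| ^ D
        rw [abs_of_nonneg (hf0 s hsIcc), hfD s hsIcc]
    have hbeta := beta_aux hc₁ hc₂ hcsum haρ
    have hbetaio : IntegrableOn (fun s => (ρ - s) ^ (-c₁) * (s - a) ^ (-c₂)) (Ioo a ρ) := by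
      have := (intervalIntegrable_iff_integrableOn_Ioc_of_le haρ.le).mp hbeta.1
      exact this.mono_set Ioo_subset_Ioc_self
    have hgmem : MemLp G (ENNReal.ofReal q) μ' := by
      refine memLp_aux hq1.le ?_ ?_
      · exact hgcont.aestronglyMeasurable measurableSet_Ioo
      · refine hbetaio.congr ?_
        refine Filter.eventually_of_mem (self_mem_ae_restrict measurableSet_Ioo) ?_
        intro s hs
        show (ρ - s) ^ (-c₁) * (s - a) ^ (-c₂) = |G s| ^ q
        rw [abs_of_nonneg (hg0' s hs), hgq s hs]
    have hHold := integral_mul_le_Lp_mul_Lq_of_nonneg hpq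
      (Filter.eventually_of_mem (self_mem_ae_restrict measurableSet_Ioo)
        (fun s hs => hf0 s (Ioo_subset_Icc_self hs)))
      (Filter.eventually_of_mem (self_mem_ae_restrict measurableSet_Ioo) hg0')
      hfmem hgmem
    -- identify the three integrals
    have hIfg : (∫ s, f s * G s ∂μ') = ∫ r in a..ρ, E r := by
      rw [hμ'def, intervalIntegral.integral_of_le haρ.le, integral_Ioc_eq_integral_Ioo]
      exact setIntegral_congr_fun measurableSet_Ioo hfg
    have hIfD : (∫ s, f s ^ D ∂μ') = J := by
      rw [hμ'def, hJdef, intervalIntegral.integral_of_le haρ.le, integral_Ioc_eq_integral_Ioo]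
      exact setIntegral_congr_fun measurableSet_Ioo
        (fun s hs => hfD s (Ioo_subset_Icc_self hs))
    have hIgq : (∫ s, G s ^ q ∂μ')
        = ∫ s in a..ρ, (ρ - s) ^ (-c₁) * (s - a) ^ (-c₂) := by
      rw [hμ'def, intervalIntegral.integral_of_le haρ.le, integral_Ioc_eq_integral_Ioo]
      exact setIntegral_congr_fun measurableSet_Ioo hgq
    rw [hIfg, hIfD, hIgq] at hHold
    -- conclude
    have hBnn : 0 ≤ ∫ s in a..ρ, (ρ - s) ^ (-c₁) * (s - a) ^ (-c₂) := by
      apply intervalIntegral.integral_nonneg haρ.le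
      intro s hs
      exact mul_nonneg (Real.rpow_nonneg (by linarith [hs.2] : (0:ℝ) ≤ ρ - s) _)
        (Real.rpow_nonneg (by linarith [hs.1] : (0:ℝ) ≤ s - a) _)
    have hfac1 : J ^ ((1:ℝ)/D) ≤ (K * z ρ * (z a ^ (α * β))⁻¹) ^ ((1:ℝ)/D) :=
      Real.rpow_le_rpow hJnn hJle (by positivity)
    have hfac2 : (∫ s in a..ρ, (ρ - s) ^ (-c₁) * (s - a) ^ (-c₂)) ^ ((1:ℝ)/q)
        ≤ B₀ ^ ((1:ℝ)/q) :=
      Real.rpow_le_rpow hBnn (le_trans hbeta.2 (le_of_eq hB₀def.symm)) (by positivity)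
    have hexp : (K * z ρ * (z a ^ (α * β))⁻¹) ^ ((1:ℝ)/D)
        = K ^ ((1:ℝ)/D) * z ρ ^ ((1:ℝ)/D) * z a ^ (-(α * β) / D) := by
      rw [Real.mul_rpow (mul_nonneg hK.le hzρpos.le) (by positivity),
        Real.mul_rpow hK.le hzρpos.le,
        ← Real.rpow_neg hza.le, ← Real.rpow_mul hza.le]
      have : -(α * β) * ((1:ℝ)/D) = -(α * β) / D := by ring
      rw [this]
    have hEnn : (0:ℝ) ≤ (K * z ρ * (z a ^ (α * β))⁻¹) ^ ((1:ℝ)/D) :=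
      Real.rpow_nonneg (by positivity) _
    calc (∫ r in a..ρ, E r)
        ≤ J ^ ((1:ℝ)/D) * (∫ s in a..ρ, (ρ - s) ^ (-c₁) * (s - a) ^ (-c₂)) ^ ((1:ℝ)/q) :=
          hHold
      _ ≤ (K * z ρ * (z a ^ (α * β))⁻¹) ^ ((1:ℝ)/D) * B₀ ^ ((1:ℝ)/q) := by
          apply mul_le_mul hfac1 hfac2 (Real.rpow_nonneg hBnn _) hEnn
      _ = C₀ * (z ρ ^ ((1:ℝ) / D) * z a ^ (-(α * β) / D)) := by
          rw [hexp, hC₀def]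
          ring
  -- the doubling estimate
  have hdouble : ∀ a, R ≤ a → a ≤ T → 0 < z a → z T ≤ 2 * z a →
      (∫ r in a..T, E r) ≤ C₀ * 2 ^ ((1:ℝ)/D) * z a ^ (-γ) := by
    intro a ha haT hza hzT
    rcases eq_or_lt_of_le haT with rfl | haT'
    · rw [intervalIntegral.integral_same]
      positivity
    · have h1 := hmain a T ha haT' le_rfl hza
      have hzTnn : 0 ≤ z T := (hznn T hRT.le le_rfl)
      have h2 : z T ^ ((1:ℝ)/D) ≤ (2 * z a) ^ ((1:ℝ)/D) :=
        Real.rpow_le_rpow hzTnn hzT (by positivity)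
      have h3 : (2 * z a) ^ ((1:ℝ)/D) = 2 ^ ((1:ℝ)/D) * z a ^ ((1:ℝ)/D) :=
        Real.mul_rpow (by norm_num) hza.le
      have h4 : z a ^ ((1:ℝ)/D) * z a ^ (-(α * β) / D) = z a ^ (-γ) := by
        rw [← Real.rpow_add hza]
        congr 1
        rw [hγdef]
        ring
      calc (∫ r in a..T, E r)
          ≤ C₀ * (z T ^ ((1:ℝ)/D) * z a ^ (-(α * β) / D)) := h1
        _ ≤ C₀ * ((2 * z a) ^ ((1:ℝ)/D) * z a ^ (-(α * β) / D)) := by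
            exact mul_le_mul_of_nonneg_left
              (mul_le_mul_of_nonneg_right h2 (Real.rpow_nonneg hza.le _)) hC₀.le
        _ = C₀ * 2 ^ ((1:ℝ)/D) * z a ^ (-γ) := by
            rw [h3, ← h4]
            ring
  -- the induction on the number of doublings
  have hind : ∀ k : ℕ, ∀ a, R ≤ a → a ≤ T → 0 < z a → z T ≤ 2 ^ k * z a →
      (∫ r in a..T, E r) ≤ M * z a ^ (-γ) := by
    intro k
    induction k with
    | zero =>
      intro a ha haT hza hzT
      have : z T ≤ 2 * z a := by
        rw [pow_zero] at hzT
        linarith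
      calc (∫ r in a..T, E r) ≤ C₀ * 2 ^ ((1:ℝ)/D) * z a ^ (-γ) := hdouble a ha haT hza this
        _ ≤ M * z a ^ (-γ) :=
            mul_le_mul_of_nonneg_right hMge (Real.rpow_nonneg hza.le _)
    | succ k ih =>
      intro a ha haT hza hzT
      by_cases hcase : z T ≤ 2 * z a
      · calc (∫ r in a..T, E r) ≤ C₀ * 2 ^ ((1:ℝ)/D) * z a ^ (-γ) :=
            hdouble a ha haT hza hcase
          _ ≤ M * z a ^ (-γ) :=
            mul_le_mul_of_nonneg_right hMge (Real.rpow_nonneg hza.le _)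
      · push_neg at hcase
        -- find the doubling point by the intermediate value theorem
        have hcont' : ContinuousOn z (Icc a T) := hzcont.mono (Icc_subset_Icc ha le_rfl)
        have hmem : (2 * z a) ∈ Icc (z a) (z T) := ⟨by linarith, hcase.le⟩
        obtain ⟨ρ, hρmem, hzρ⟩ := intermediate_value_Icc haT hcont' hmem
        have haρ : a < ρ := by
          rcases eq_or_lt_of_le hρmem.1 with rfl | h'
          · exfalso
            linarith
          · exact h'
        have hρT : ρ ≤ T := hρmem.2
        have hzρpos : 0 < z ρ := by rw [hzρ]; linarith
        have hsplit := intervalIntegral.integral_add_adjacent_intervals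
          (hEint a ρ ha haρ.le hρT) (hEint ρ T (ha.trans haρ.le) hρT le_rfl)
        have h1 := hmain a ρ ha haρ hρT hza
        have h2 : (∫ r in ρ..T, E r) ≤ M * z ρ ^ (-γ) := by
          apply ih ρ (ha.trans haρ.le) hρT hzρpos
          rw [hzρ]
          calc z T ≤ 2 ^ (k+1) * z a := hzT
            _ = 2 ^ k * (2 * z a) := by ring
        have h3 : z ρ ^ ((1:ℝ)/D) * z a ^ (-(α * β) / D) ≤ 2 ^ ((1:ℝ)/D) * z a ^ (-γ) := by
          rw [hzρ]
          rw [Real.mul_rpow (by norm_num) hza.le]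
          have h4 : z a ^ ((1:ℝ)/D) * z a ^ (-(α * β) / D) = z a ^ (-γ) := by
            rw [← Real.rpow_add hza]
            congr 1
            rw [hγdef]
            ring
          rw [mul_assoc, h4]
        have h5 : (∫ r in a..ρ, E r) ≤ C₀ * 2 ^ ((1:ℝ)/D) * z a ^ (-γ) := by
          calc (∫ r in a..ρ, E r) ≤ C₀ * (z ρ ^ ((1:ℝ)/D) * z a ^ (-(α * β) / D)) := h1
            _ ≤ C₀ * (2 ^ ((1:ℝ)/D) * z a ^ (-γ)) := mul_le_mul_of_nonneg_left h3 hC₀.le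
            _ = C₀ * 2 ^ ((1:ℝ)/D) * z a ^ (-γ) := by ring
        have h6 : M * z ρ ^ (-γ) = M * 2 ^ (-γ) * z a ^ (-γ) := by
          rw [hzρ, Real.mul_rpow (by norm_num) hza.le]
          ring
        rw [← hsplit]
        calc (∫ r in a..ρ, E r) + ∫ r in ρ..T, E r
            ≤ C₀ * 2 ^ ((1:ℝ)/D) * z a ^ (-γ) + M * z ρ ^ (-γ) := by linarith
          _ = C₀ * 2 ^ ((1:ℝ)/D) * z a ^ (-γ) + M * 2 ^ (-γ) * z a ^ (-γ) := by rw [h6]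
          _ = (C₀ * 2 ^ ((1:ℝ)/D) + M * 2 ^ (-γ)) * z a ^ (-γ) := by ring
          _ = M * z a ^ (-γ) := by rw [hMrec]
  -- conclusion
  intro A hA hzA
  have hzA' : 0 < z A := hzA
  have hAT : A ≤ T := hA.2.le
  have hRA : R ≤ A := hA.1.le
  obtain ⟨k, hk⟩ := pow_unbounded_of_one_lt (z T / z A) (one_lt_two)
  have hzT : z T ≤ 2 ^ k * z A := by
    rw [div_lt_iff₀ hzA'] at hk
    linarith
  have hfin := hind k A hRA hAT hzA' hzT
  have hgoal : z A ^ γ * (∫ r in A..T, E r) ≤ M := by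
    calc z A ^ γ * (∫ r in A..T, E r)
        ≤ z A ^ γ * (M * z A ^ (-γ)) := by
          apply mul_le_mul_of_nonneg_left hfin (Real.rpow_nonneg hzA'.le _)
      _ = M * (z A ^ γ * z A ^ (-γ)) := by ring
      _ = M := by
          rw [← Real.rpow_add hzA']
          simp
  exact hgoal
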